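/- arXiv:1912.00644 — 3 statements merged into one kernel-verified Lean document; each statement's English description precedes it below -/
import Mathlib

section
/- Let y ∈ ℂ^{p_1} ⊕ … ⊕ ℂ^{p_N} be nonzero and suppose λ y_k = G_k Σ_{j=1}^N e_{kj} Δ_{kj} y_j for all k, where G_k ∈ ℂ^{p_k × m_k}, e_{kj} ≥ 0, and Δ_{kj} ∈ ℂ^{m_k × p_j}. Then the vector z = (‖y_1‖², …, ‖y_N‖²) ∈ ℝ^N_{≥0} is nonzero and satisfies |λ|² z ≤ ‖Δ‖² · diag(‖G_k‖²) · E^{∘2} · z componentwise, where ‖Δ‖ = max_k ‖Δ_k‖ with Δ_k = [Δ_{k1}, …, Δ_{kN}] acting on the direct sum with norm ‖y‖² = Σ‖y_j‖². -/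
/-- If `y ≠ 0` satisfies the componentwise eigenvalue equation
`μ y_k = G_k Σ_j e_{kj} Δ_{kj} y_j`, then the vector `z = (‖y_k‖²)_k` is nonzero
and satisfies `|μ|² z ≤ ‖Δ‖² · diag(‖G_k‖²) · E^{∘2} · z` componentwise, where
`‖Δ‖ = max_k ‖Δ_k‖` is the maximum of the block-row norms. -/
theorem componentwise_eigenvector_estimate
    {N : ℕ} (hN : 0 < N) (p m : Fin N → ℕ)
    (G : ∀ k, EuclideanSpace ℂ (Fin (m k)) →L[ℂ] EuclideanSpace ℂ (Fin (p k)))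
    (e : Fin N → Fin N → ℝ) (he : ∀ k j, 0 ≤ e k j)
    (Δ : ∀ k j, EuclideanSpace ℂ (Fin (p j)) →L[ℂ] EuclideanSpace ℂ (Fin (m k)))
    (Δrow : ∀ k, (PiLp 2 fun j => EuclideanSpace ℂ (Fin (p j))) →L[ℂ]
      EuclideanSpace ℂ (Fin (m k)))
    (hrow : ∀ k (y : PiLp 2 fun j => EuclideanSpace ℂ (Fin (p j))),
      Δrow k y = ∑ j, Δ k j (y j))
    (μ : ℂ) (y : PiLp 2 fun j => EuclideanSpace ℂ (Fin (p j))) (hy : y ≠ 0)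
    (heig : ∀ k, μ • y k = (G k) (∑ j, ((e k j : ℂ)) • (Δ k j) (y j))) :
    (fun k => ‖y k‖ ^ 2) ≠ (0 : Fin N → ℝ) ∧
      ∀ k, ‖μ‖ ^ 2 * ‖y k‖ ^ 2 ≤
        (⨆ i, ‖Δrow i‖) ^ 2 * (‖G k‖ ^ 2 * ∑ j, (e k j) ^ 2 * ‖y j‖ ^ 2) := by
  haveI : Nonempty (Fin N) := ⟨⟨0, hN⟩⟩
  constructor
  · intro h
    apply hy
    refine PiLp.ext fun k => ?_
    have hk := congrFun h k
    simp only [Pi.zero_apply] at hk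
    have : ‖y k‖ = 0 := by nlinarith [norm_nonneg (y k)]
    simpa [norm_eq_zero] using this
  · intro k
    set w : PiLp 2 fun j => EuclideanSpace ℂ (Fin (p j)) :=
      WithLp.toLp 2 (fun j => ((e k j : ℂ)) • y j) with hw
    have hΔw : Δrow k w = ∑ j, ((e k j : ℂ)) • (Δ k j) (y j) := by
      rw [hrow]
      exact Finset.sum_congr rfl fun j _ => by simp [hw]
    have h1 : ‖μ‖ * ‖y k‖ ≤ ‖G k‖ * ((⨆ i, ‖Δrow i‖) * ‖w‖) := by
      calc ‖μ‖ * ‖y k‖ = ‖μ • y k‖ := (norm_smul _ _).symm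
        _ = ‖(G k) (Δrow k w)‖ := by rw [heig k, hΔw]
        _ ≤ ‖G k‖ * ‖Δrow k w‖ := (G k).le_opNorm _
        _ ≤ ‖G k‖ * ((⨆ i, ‖Δrow i‖) * ‖w‖) := by
            apply mul_le_mul_of_nonneg_left _ (norm_nonneg _)
            calc ‖Δrow k w‖ ≤ ‖Δrow k‖ * ‖w‖ := (Δrow k).le_opNorm _
              _ ≤ (⨆ i, ‖Δrow i‖) * ‖w‖ :=
                mul_le_mul_of_nonneg_right
                  (le_ciSup (f := fun i => ‖Δrow i‖) (Set.Finite.bddAbove (Set.finite_range _)) k)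
                  (norm_nonneg _)
    have hw2 : ‖w‖ ^ 2 = ∑ j, (e k j) ^ 2 * ‖y j‖ ^ 2 := by
      rw [PiLp.norm_sq_eq_of_L2]
      exact Finset.sum_congr rfl fun j _ => by
        simp [hw, norm_smul, mul_pow, Complex.norm_real, abs_of_nonneg (he k j)]
    have hsup : 0 ≤ ⨆ i, ‖Δrow i‖ :=
      le_trans (norm_nonneg _) (le_ciSup (f := fun i => ‖Δrow i‖) (Set.Finite.bddAbove (Set.finite_range _)) k)
    have h2 : (‖μ‖ * ‖y k‖) ^ 2 ≤ (‖G k‖ * ((⨆ i, ‖Δrow i‖) * ‖w‖)) ^ 2 := by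
      apply pow_le_pow_left₀ (by positivity) h1
    calc ‖μ‖ ^ 2 * ‖y k‖ ^ 2 = (‖μ‖ * ‖y k‖) ^ 2 := by ring
      _ ≤ (‖G k‖ * ((⨆ i, ‖Δrow i‖) * ‖w‖)) ^ 2 := h2
      _ = (⨆ i, ‖Δrow i‖) ^ 2 * (‖G k‖ ^ 2 * ‖w‖ ^ 2) := by ring
      _ = (⨆ i, ‖Δrow i‖) ^ 2 * (‖G k‖ ^ 2 * ∑ j, (e k j) ^ 2 * ‖y j‖ ^ 2) := by
          rw [hw2]
end

section
/- Fix vectors u_k ∈ U_k and y_l ∈ Y_l (finite-dimensional complex inner product spaces) and non-negative reals e_{kl}. Define rank-one maps Δ_{kl} : Y_l → U_k by Δ_{kl}(y) = (e_{kl} ⟨y, y_l⟩ / Σ_{j} e_{kj}² ‖y_j‖²) u_k when Σ_j e_{kj}² ‖y_j‖² ≠ 0, and Δ_{kl} = 0 otherwise. Then for each k with Σ_j e_{kj}² ‖y_j‖² ≠ 0 one has Σ_{l=1}^N e_{kl} Δ_{kl}(y_l) = u_k, and the row norms satisfy Σ_{l=1}^N ‖Δ_{kl}‖² = ‖u_k‖²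 / Σ_{j} e_{kj}² ‖y_j‖². -/
/-- For fixed vectors `u_k ∈ U_k`, `y_l ∈ Y_l` and `e_{kl} ≥ 0`, the rank-one maps
`Δ_{kl}(y) = (e_{kl} ⟨y, y_l⟩ / Σ_j e_{kj}² ‖y_j‖²) u_k` (and `Δ_{kl} = 0` if the
denominator vanishes) satisfy, for each `k` with `Σ_j e_{kj}² ‖y_j‖² ≠ 0`:
`Σ_l e_{kl} Δ_{kl}(y_l) = u_k` and `Σ_l ‖Δ_{kl}‖² = ‖u_k‖² / Σ_j e_{kj}² ‖y_j‖²`. -/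
theorem rank_one_feedback_construction
    {N : ℕ} {U Y : Fin N → Type*}
    [∀ k, NormedAddCommGroup (U k)] [∀ k, InnerProductSpace ℂ (U k)]
    [∀ k, FiniteDimensional ℂ (U k)]
    [∀ l, NormedAddCommGroup (Y l)] [∀ l, InnerProductSpace ℂ (Y l)]
    [∀ l, FiniteDimensional ℂ (Y l)]
    (u : ∀ k, U k) (yv : ∀ l, Y l)
    (e : Fin N → Fin N → ℝ) (he : ∀ k l, 0 ≤ e k l)
    (Δ : ∀ k l, Y l →L[ℂ] U k)
    (hΔ : ∀ k l (y : Y l),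
      Δ k l y =
        if (∑ j, (e k j) ^ 2 * ‖yv j‖ ^ 2) = 0 then 0
        else (((e k l : ℂ) * (inner ℂ (yv l) y : ℂ)) /
          ((∑ j, (e k j) ^ 2 * ‖yv j‖ ^ 2 : ℝ) : ℂ)) • u k)
    (k : Fin N) (hk : (∑ j, (e k j) ^ 2 * ‖yv j‖ ^ 2) ≠ 0) :
    (∑ l, (e k l : ℂ) • Δ k l (yv l)) = u k ∧
      (∑ l, ‖Δ k l‖ ^ 2) = ‖u k‖ ^ 2 / (∑ j, (e k j) ^ 2 * ‖yv j‖ ^ 2) := by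
  set S : ℝ := ∑ j, (e k j) ^ 2 * ‖yv j‖ ^ 2 with hS
  have hSpos : 0 < S := by
    rcases (Finset.sum_nonneg fun j _ => by positivity : (0:ℝ) ≤ S).lt_or_eq with h | h
    · exact h
    · exact absurd h.symm hk
  constructor
  · have h1 : ∀ l, (e k l : ℂ) • Δ k l (yv l)
        = (((e k l)^2 * ‖yv l‖^2 / S : ℝ) : ℂ) • u k := by
      intro l
      rw [hΔ, if_neg hk, smul_smul, inner_self_eq_norm_sq_to_K]
      congr 1
      rw [← hS, Complex.ofReal_div]
      push_cast
      field_simp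
      rfl
    have h2 : (∑ l, ((e k l)^2 * ‖yv l‖^2 / S : ℝ)) = 1 := by
      rw [← Finset.sum_div, ← hS, div_self hk]
    calc (∑ l, (e k l : ℂ) • Δ k l (yv l))
        = ((∑ l, ((e k l)^2 * ‖yv l‖^2 / S : ℝ) : ℝ) : ℂ) • u k := by
          rw [Complex.ofReal_sum, Finset.sum_smul]
          exact Finset.sum_congr rfl fun l _ => h1 l
      _ = u k := by rw [h2, Complex.ofReal_one, one_smul]
  · have hnorm : ∀ l, ‖Δ k l‖ = e k l * ‖yv l‖ * ‖u k‖ / S := by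
      intro l
      have heq : Δ k l = ((e k l / S : ℝ) : ℂ) •
          (innerSL ℂ (yv l)).smulRight (u k) := by
        ext y
        rw [hΔ, if_neg hk]
        simp only [ContinuousLinearMap.coe_smul', Pi.smul_apply,
          ContinuousLinearMap.smulRight_apply, innerSL_apply_apply, smul_smul]
        congr 1
        rw [hS]
        push_cast [div_eq_mul_inv]
        ring
      rw [heq]
      rw [norm_smul ((e k l / S : ℝ) : ℂ) ((innerSL ℂ (yv l)).smulRight (u k)),
        ContinuousLinearMap.norm_smulRight_apply, innerSL_apply_norm]
      rw [Complex.norm_real, Real.norm_eq_abs, abs_div,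
        abs_of_nonneg (he k l), abs_of_pos hSpos]
      ring
    calc (∑ l, ‖Δ k l‖ ^ 2) = ∑ l, (e k l)^2 * ‖yv l‖^2 * (‖u k‖^2 / S^2) := by
          refine Finset.sum_congr rfl fun l _ => ?_
          rw [hnorm l]; ring
      _ = ‖u k‖ ^ 2 / S := by
          rw [← Finset.sum_mul, ← hS]
          field_simp
end

section
/- Let (T(t))_{t≥0} be a C₀-semigroup on a Hilbert space X such that ∫₀^∞ ‖T(t)x‖² dt ≤ M‖x‖² for all x ∈ X and some M > 0. Then (T(t))_{t≥0} is exponentially stable, i.e., there exist constants C ≥ 1, ε > 0 with ‖T(t)‖ ≤ C e^{-εt} for all t ≥ 0. -/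
open MeasureTheory
open scoped ENNReal NNReal

/-- Datko's theorem (case `p = 2`): a `C₀`-semigroup `(T(t))_{t≥0}` on a Hilbert space
satisfying `∫₀^∞ ‖T(t)x‖² dt ≤ M ‖x‖²` for all `x` is exponentially stable, i.e. there
are `C ≥ 1` and `ε > 0` with `‖T(t)‖ ≤ C e^{-εt}` for all `t ≥ 0`. -/
theorem datko_theorem
    {X : Type*} [NormedAddCommGroup X] [InnerProductSpace ℂ X] [CompleteSpace X]
    (T : ℝ → X →L[ℂ] X)
    (hT0 : T 0 = 1)
    (hTsem : ∀ s t : ℝ, 0 ≤ s → 0 ≤ t → T (s + t) = (T s).comp (T t))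
    (hTcont : ∀ x : X, ContinuousOn (fun t => T t x) (Set.Ici (0 : ℝ)))
    (M : ℝ) (hM : 0 < M)
    (hint : ∀ x : X,
      (∫⁻ t in Set.Ioi (0 : ℝ), (‖T t x‖₊ : ℝ≥0∞) ^ 2) ≤ ENNReal.ofReal (M * ‖x‖ ^ 2)) :
    ∃ C : ℝ, 1 ≤ C ∧ ∃ ε : ℝ, 0 < ε ∧
      ∀ t : ℝ, 0 ≤ t → ‖T t‖ ≤ C * Real.exp (-ε * t) := by
  -- Step A: uniform bound `K ≥ 1` on `[0,1]` via Banach–Steinhaus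
  obtain ⟨K₀, hK₀⟩ : ∃ C', ∀ i : Set.Icc (0:ℝ) 1, ‖T i‖ ≤ C' := by
    apply banach_steinhaus
    intro x
    obtain ⟨C, hC⟩ := (isCompact_Icc : IsCompact (Set.Icc (0:ℝ) 1)).exists_bound_of_continuousOn
      ((hTcont x).mono (fun t ht => ht.1))
    exact ⟨C, fun i => hC i i.2⟩
  set K : ℝ := max K₀ 1 with hKdef
  have hK1 : (1:ℝ) ≤ K := le_max_right _ _
  have hK0 : (0:ℝ) < K := lt_of_lt_of_le one_pos hK1
  have hKb : ∀ t : ℝ, 0 ≤ t → t ≤ 1 → ‖T t‖ ≤ K := fun t h0 h1 =>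
    le_trans (hK₀ ⟨t, h0, h1⟩) (le_max_left _ _)
  -- The core integral estimate
  have hsq : ∀ y : X, ((‖y‖₊ : ℝ≥0∞)) ^ 2 = ENNReal.ofReal (‖y‖ ^ 2) := by
    intro y
    rw [ENNReal.ofReal_pow (norm_nonneg y), ofReal_norm]; rfl
  have core : ∀ (x : X) (t a c : ℝ), 0 ≤ c → 0 ≤ a → a < t →
      (∀ s : ℝ, s ∈ Set.Ioc a t → ‖T t x‖ ≤ c * ‖T s x‖) →
      (t - a) * ‖T t x‖ ^ 2 ≤ c ^ 2 * (M * ‖x‖ ^ 2) := by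
    intro x t a c hc ha hat hpt
    have h1 : ENNReal.ofReal ((t - a) * ‖T t x‖ ^ 2)
        = ∫⁻ _ in Set.Ioc a t, ENNReal.ofReal (‖T t x‖ ^ 2) := by
      rw [setLIntegral_const, Real.volume_Ioc,
        ENNReal.ofReal_mul (by linarith : (0:ℝ) ≤ t - a)]
      ring
    have h2 : (∫⁻ _ in Set.Ioc a t, ENNReal.ofReal (‖T t x‖ ^ 2))
        ≤ ∫⁻ s in Set.Ioc a t, ENNReal.ofReal (c ^ 2) * ENNReal.ofReal (‖T s x‖ ^ 2) := by
      apply setLIntegral_mono' measurableSet_Ioc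
      intro s hs
      rw [← ENNReal.ofReal_mul (by positivity)]
      apply ENNReal.ofReal_le_ofReal
      have := hpt s hs
      nlinarith [norm_nonneg (T t x), norm_nonneg (T s x)]
    have h3 : (∫⁻ s in Set.Ioc a t, ENNReal.ofReal (c ^ 2) * ENNReal.ofReal (‖T s x‖ ^ 2))
        = ENNReal.ofReal (c ^ 2) * ∫⁻ s in Set.Ioc a t, ENNReal.ofReal (‖T s x‖ ^ 2) :=
      lintegral_const_mul' _ _ ENNReal.ofReal_ne_top
    have h4 : (∫⁻ s in Set.Ioc a t, ENNReal.ofReal (‖T s x‖ ^ 2))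
        ≤ ENNReal.ofReal (M * ‖x‖ ^ 2) := by
      refine le_trans ?_ (hint x)
      refine le_trans (le_of_eq ?_) (lintegral_mono_set (show Set.Ioc a t ⊆ Set.Ioi 0 from fun s hs => lt_of_le_of_lt ha hs.1))
      exact setLIntegral_congr_fun measurableSet_Ioc
        (fun s _ => (hsq (T s x)).symm)
    have : ENNReal.ofReal ((t - a) * ‖T t x‖ ^ 2)
        ≤ ENNReal.ofReal (c ^ 2 * (M * ‖x‖ ^ 2)) := by
      rw [h1, ENNReal.ofReal_mul (by positivity)]
      exact le_trans h2 (le_trans h3.le (mul_le_mul_right h4 _))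
    rwa [ENNReal.ofReal_le_ofReal_iff (by positivity)] at this
  -- Step B: for `t ≥ 1`, `‖T t x‖² ≤ K² M ‖x‖²`
  have hB : ∀ (t : ℝ), 1 ≤ t → ∀ x : X, ‖T t x‖ ^ 2 ≤ K ^ 2 * (M * ‖x‖ ^ 2) := by
    intro t ht x
    have h := core x t (t - 1) K hK0.le (by linarith) (by linarith) ?_
    · linarith [h]
    · intro s hs
      have hs0 : 0 < s := lt_of_le_of_lt (by linarith) hs.1
      have hts : T t = (T (t - s)).comp (T s) := by
        have := hTsem (t - s) s (by linarith [hs.2]) hs0.le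
        rwa [sub_add_cancel] at this
      calc ‖T t x‖ = ‖T (t - s) (T s x)‖ := by rw [hts]; rfl
        _ ≤ ‖T (t - s)‖ * ‖T s x‖ := (T (t - s)).le_opNorm _
        _ ≤ K * ‖T s x‖ := by
            have := hKb (t - s) (by linarith [hs.2]) (by linarith [hs.1])
            exact mul_le_mul_of_nonneg_right this (norm_nonneg _)
  -- Uniform bound `L` for all `t ≥ 0`
  set L : ℝ := K * (1 + Real.sqrt M) with hLdef
  have hsM : 0 ≤ Real.sqrt M := Real.sqrt_nonneg M
  have hKL : K ≤ L := by nlinarith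
  have hL1 : (1:ℝ) ≤ L := hK1.trans hKL
  have hL0 : (0:ℝ) < L := lt_of_lt_of_le one_pos hL1
  have hLb : ∀ t : ℝ, 0 ≤ t → ‖T t‖ ≤ L := by
    intro t ht
    rcases le_or_gt t 1 with h1 | h1
    · exact (hKb t ht h1).trans hKL
    · apply (T t).opNorm_le_bound hL0.le
      intro x
      have h := hB t h1.le x
      have hMs : Real.sqrt M ^ 2 = M := Real.sq_sqrt hM.le
      have hLsq : K ^ 2 * M ≤ L ^ 2 := by
        rw [hLdef]
        nlinarith [mul_nonneg (sq_nonneg K) (by linarith : (0:ℝ) ≤ 1 + 2 * Real.sqrt M)]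
      have hsq2 : ‖T t x‖ ^ 2 ≤ (L * ‖x‖) ^ 2 := by
        nlinarith [mul_nonneg (by linarith : (0:ℝ) ≤ L ^ 2 - K ^ 2 * M) (sq_nonneg ‖x‖)]
      have := Real.sqrt_le_sqrt hsq2
      rwa [Real.sqrt_sq (norm_nonneg _), Real.sqrt_sq (by positivity)] at this
  -- Step C: `‖T t₀‖ ≤ 1/2` for `t₀ := 1 + 4 L² M`
  set t₀ : ℝ := 1 + 4 * L ^ 2 * M with ht₀def
  have ht₀1 : (1:ℝ) ≤ t₀ := by nlinarith
  have ht₀0 : (0:ℝ) < t₀ := lt_of_lt_of_le one_pos ht₀1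
  have hhalf : ∀ x : X, ‖T t₀ x‖ ≤ (1/2) * ‖x‖ := by
    intro x
    have h := core x t₀ 0 L hL0.le le_rfl ht₀0 ?_
    · have hsq2 : ‖T t₀ x‖ ^ 2 ≤ ((1/2) * ‖x‖) ^ 2 := by
        nlinarith [norm_nonneg (T t₀ x), norm_nonneg x, sq_nonneg (‖T t₀ x‖)]
      have := Real.sqrt_le_sqrt hsq2
      rwa [Real.sqrt_sq (norm_nonneg _), Real.sqrt_sq (by positivity)] at this
    · intro s hs
      have hts : T t₀ = (T (t₀ - s)).comp (T s) := by
        have := hTsem (t₀ - s) s (by linarith [hs.2]) hs.1.le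
        rwa [sub_add_cancel] at this
      calc ‖T t₀ x‖ = ‖T (t₀ - s) (T s x)‖ := by rw [hts]; rfl
        _ ≤ ‖T (t₀ - s)‖ * ‖T s x‖ := (T (t₀ - s)).le_opNorm _
        _ ≤ L * ‖T s x‖ :=
            mul_le_mul_of_nonneg_right (hLb _ (by linarith [hs.2])) (norm_nonneg _)
  -- Step D: iterate
  have hiter : ∀ n : ℕ, ∀ x : X, ‖T ((n : ℝ) * t₀) x‖ ≤ (1/2) ^ n * ‖x‖ := by
    intro n
    induction n with
    | zero => intro x; simp [hT0]
    | succ n ih =>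
      intro x
      have hco : T ((↑(n + 1) : ℝ) * t₀) = (T t₀).comp (T ((n : ℝ) * t₀)) := by
        have := hTsem t₀ ((n : ℝ) * t₀) ht₀0.le (by positivity)
        rw [← this]; congr 1; push_cast; ring
      calc ‖T ((↑(n + 1) : ℝ) * t₀) x‖ = ‖T t₀ (T ((n : ℝ) * t₀) x)‖ := by rw [hco]; rfl
        _ ≤ (1/2) * ‖T ((n : ℝ) * t₀) x‖ := hhalf _
        _ ≤ (1/2) * ((1/2) ^ n * ‖x‖) := by
            have := ih x; linarith
        _ = (1/2) ^ (n + 1) * ‖x‖ := by ring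
  -- Conclusion
  refine ⟨2 * L, by linarith, Real.log 2 / t₀, by positivity, ?_⟩
  intro t ht
  set n : ℕ := ⌊t / t₀⌋₊ with hn
  have hn1 : (n : ℝ) ≤ t / t₀ := Nat.floor_le (by positivity)
  have hn2 : t / t₀ < n + 1 := Nat.lt_floor_add_one _
  have hnt : (n : ℝ) * t₀ ≤ t := (le_div_iff₀ ht₀0).mp hn1
  set r : ℝ := t - (n : ℝ) * t₀ with hr
  have hr0 : 0 ≤ r := by simp [hr]; linarith
  have hco : T t = (T r).comp (T ((n : ℝ) * t₀)) := by
    have := hTsem r ((n : ℝ) * t₀) hr0 (by positivity)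
    rw [← this]; congr 1; simp [hr]
  have hnorm : ‖T t‖ ≤ L * (1/2) ^ n := by
    apply (T t).opNorm_le_bound (by positivity)
    intro x
    calc ‖T t x‖ = ‖T r (T ((n : ℝ) * t₀) x)‖ := by rw [hco]; rfl
      _ ≤ ‖T r‖ * ‖T ((n : ℝ) * t₀) x‖ := (T r).le_opNorm _
      _ ≤ L * ((1/2) ^ n * ‖x‖) := by
          apply mul_le_mul (hLb r hr0) (hiter n x) (norm_nonneg _) hL0.le
      _ = L * (1/2) ^ n * ‖x‖ := by ring
  refine hnorm.trans ?_
  -- `L (1/2)^n ≤ 2L exp(-(log 2 / t₀) t)`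
  have hpow : ((1:ℝ)/2) ^ n = Real.exp (-(Real.log 2)) ^ n := by
    rw [Real.exp_neg, Real.exp_log (by norm_num : (0:ℝ) < 2)]
    norm_num
  have hexp : Real.exp (-(Real.log 2)) ^ n = Real.exp ((n : ℝ) * (-(Real.log 2))) :=
    (Real.exp_nat_mul _ n).symm
  have hlog2 : (0:ℝ) < Real.log 2 := Real.log_pos (by norm_num)
  have hkey : Real.exp ((n : ℝ) * (-(Real.log 2))) ≤ 2 * Real.exp (-(Real.log 2 / t₀) * t) := by
    have hfloor : t / t₀ - 1 ≤ (n : ℝ) := by linarith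
    have ht' : Real.log 2 / t₀ * t = (t / t₀) * Real.log 2 := by
      field_simp
    have hineq : (n : ℝ) * (-(Real.log 2)) ≤ Real.log 2 + (-(Real.log 2 / t₀) * t) := by
      have := mul_le_mul_of_nonneg_right hfloor hlog2.le
      nlinarith
    calc Real.exp ((n : ℝ) * (-(Real.log 2)))
        ≤ Real.exp (Real.log 2 + (-(Real.log 2 / t₀) * t)) := Real.exp_le_exp.mpr hineq
      _ = 2 * Real.exp (-(Real.log 2 / t₀) * t) := by
          rw [Real.exp_add, Real.exp_log (by norm_num : (0:ℝ) < 2)]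
  calc L * (1/2) ^ n = L * Real.exp ((n : ℝ) * (-(Real.log 2))) := by rw [hpow, hexp]
    _ ≤ L * (2 * Real.exp (-(Real.log 2 / t₀) * t)) :=
        mul_le_mul_of_nonneg_left hkey hL0.le
    _ = 2 * L * Real.exp (-(Real.log 2 / t₀) * t) := by ring
end
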